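/- arXiv:2409.08467 — 2 statements merged into one kernel-verified Lean document; each statement's English description precedes it below -/
import Mathlib

section
/- Under the hypotheses of the SOS identity (dichotomic observables A_x, B_y with squares equal to I, ω_x = ‖Σ_y α_{xy}(I⊗B_y)|ψ⟩‖), the expectation of the Bell operator satisfies ⟨ψ|𝓑|ψ⟩ ≤ Σ_x ω_x. -/
open Matrix Kronecker

private lemma kron_conjTranspose {p q r s : ℕ} (A : Matrix (Fin p) (Fin q) ℂ)
    (B : Matrix (Fin r) (Fin s) ℂ) : (A ⊗ₖ B)ᴴ = Aᴴ ⊗ₖ Bᴴ := by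
  ext ⟨i, j⟩ ⟨k, l⟩
  simp [Matrix.conjTranspose_apply, mul_comm]

private lemma cs_dot {k : Type*} [Fintype k] (u v : k → ℂ) :
    (star u ⬝ᵥ v).re ≤ Real.sqrt (star u ⬝ᵥ u).re * Real.sqrt (star v ⬝ᵥ v).re := by
  let u' : EuclideanSpace ℂ k := WithLp.toLp 2 u
  let v' : EuclideanSpace ℂ k := WithLp.toLp 2 v
  have hiuv : (inner ℂ u' v' : ℂ) = star u ⬝ᵥ v := by
    simp [PiLp.inner_apply, RCLike.inner_apply, dotProduct, u', v', mul_comm,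
      -inner_self_eq_norm_sq_to_K]
  have hiuu : (inner ℂ u' u' : ℂ) = star u ⬝ᵥ u := by
    simp [PiLp.inner_apply, RCLike.inner_apply, dotProduct, u', mul_comm,
      -inner_self_eq_norm_sq_to_K]
  have hivv : (inner ℂ v' v' : ℂ) = star v ⬝ᵥ v := by
    simp [PiLp.inner_apply, RCLike.inner_apply, dotProduct, v', mul_comm,
      -inner_self_eq_norm_sq_to_K]
  calc (star u ⬝ᵥ v).re = (inner ℂ u' v' : ℂ).re := by rw [hiuv]
    _ ≤ ‖(inner ℂ u' v' : ℂ)‖ := by simpa using RCLike.re_le_norm (inner ℂ u' v' : ℂ)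
    _ ≤ ‖u'‖ * ‖v'‖ := norm_inner_le_norm _ _
    _ = Real.sqrt (star u ⬝ᵥ u).re * Real.sqrt (star v ⬝ᵥ v).re := by
        rw [@norm_eq_sqrt_re_inner ℂ, @norm_eq_sqrt_re_inner ℂ, hiuu, hivv]
        rfl

set_option maxHeartbeats 1000000 in
theorem stmt2 (dA dB n m : ℕ) (ψ : Fin dA × Fin dB → ℂ)
    (hψ : star ψ ⬝ᵥ ψ = 1)
    (A : Fin n → Matrix (Fin dA) (Fin dA) ℂ) (B : Fin m → Matrix (Fin dB) (Fin dB) ℂ)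
    (hA : ∀ x, (A x).IsHermitian) (hB : ∀ y, (B y).IsHermitian)
    (hA2 : ∀ x, A x * A x = 1) (hB2 : ∀ y, B y * B y = 1)
    (α : Fin n → Fin m → ℝ)
    (𝓑 : Matrix (Fin dA × Fin dB) (Fin dA × Fin dB) ℂ)
    (h𝓑 : 𝓑 = ∑ x, ∑ y, (α x y : ℂ) • (A x ⊗ₖ B y))
    (ω : Fin n → ℝ)
    (hω : ∀ x, ω x = Real.sqrt ((star ((∑ y, (α x y : ℂ) •
        ((1 : Matrix (Fin dA) (Fin dA) ℂ) ⊗ₖ B y)) *ᵥ ψ) ⬝ᵥ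
        ((∑ y, (α x y : ℂ) • ((1 : Matrix (Fin dA) (Fin dA) ℂ) ⊗ₖ B y)) *ᵥ ψ))).re) :
    (star ψ ⬝ᵥ (𝓑 *ᵥ ψ)).re ≤ ∑ x, ω x := by
  set N : Fin n → Matrix (Fin dA × Fin dB) (Fin dA × Fin dB) ℂ :=
    fun x => A x ⊗ₖ (1 : Matrix (Fin dB) (Fin dB) ℂ) with hN
  set M : Fin n → Matrix (Fin dA × Fin dB) (Fin dA × Fin dB) ℂ :=
    fun x => ∑ y, (α x y : ℂ) • ((1 : Matrix (Fin dA) (Fin dA) ℂ) ⊗ₖ B y) with hM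
  have hNherm : ∀ x, (N x)ᴴ = N x := by
    intro x
    rw [hN, kron_conjTranspose, (hA x).eq, Matrix.conjTranspose_one]
  have hNN : ∀ x, N x * N x = 1 := by
    intro x
    rw [hN]
    rw [← Matrix.mul_kronecker_mul, hA2 x, one_mul, Matrix.one_kronecker_one]
  have key : 𝓑 = ∑ x, N x * M x := by
    rw [h𝓑]
    refine Finset.sum_congr rfl fun x _ => ?_
    rw [hM, Finset.mul_sum]
    refine Finset.sum_congr rfl fun y _ => ?_
    rw [Matrix.mul_smul, ← Matrix.mul_kronecker_mul, mul_one, one_mul]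
  have hterm : ∀ x, star ψ ⬝ᵥ ((N x * M x) *ᵥ ψ) = star (N x *ᵥ ψ) ⬝ᵥ (M x *ᵥ ψ) := by
    intro x
    rw [← Matrix.mulVec_mulVec, Matrix.dotProduct_mulVec, Matrix.star_mulVec, hNherm x]
  have hmain : star ψ ⬝ᵥ (𝓑 *ᵥ ψ) = ∑ x, star (N x *ᵥ ψ) ⬝ᵥ (M x *ᵥ ψ) := by
    have hsv : (∑ x, N x * M x) *ᵥ ψ = ∑ x, (N x * M x) *ᵥ ψ := by
      ext i
      simp only [Matrix.mulVec, dotProduct, Finset.sum_apply, Matrix.sum_apply,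
        Finset.sum_mul]
      rw [Finset.sum_comm]
    have hds : star ψ ⬝ᵥ (∑ x, (N x * M x) *ᵥ ψ) = ∑ x, star ψ ⬝ᵥ ((N x * M x) *ᵥ ψ) := by
      simp only [dotProduct, Finset.sum_apply, Finset.mul_sum]
      rw [Finset.sum_comm]
    rw [key, hsv, hds]
    exact Finset.sum_congr rfl fun x _ => hterm x
  have hnorm1 : ∀ x, star (N x *ᵥ ψ) ⬝ᵥ (N x *ᵥ ψ) = 1 := by
    intro x
    rw [Matrix.star_mulVec, ← Matrix.dotProduct_mulVec, Matrix.mulVec_mulVec, hNherm x,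
      hNN x, Matrix.one_mulVec, hψ]
  rw [hmain, Complex.re_sum]
  refine Finset.sum_le_sum fun x _ => ?_
  calc (star (N x *ᵥ ψ) ⬝ᵥ (M x *ᵥ ψ)).re
      ≤ Real.sqrt (star (N x *ᵥ ψ) ⬝ᵥ (N x *ᵥ ψ)).re *
        Real.sqrt (star (M x *ᵥ ψ) ⬝ᵥ (M x *ᵥ ψ)).re := cs_dot _ _
    _ = ω x := by
        rw [hnorm1 x, hω x]
        simp [hM]
end

section
/- For any Hermitian A₀, A₁, B₀, B₁ on C² with squares equal to I, any unit |ψ⟩ ∈ C²⊗C², and any α > 0, the generalized CHSH expectation satisfies ⟨ψ| αA₀⊗B₀ + αA₀⊗B₁ + A₁⊗B₀ − A₁⊗B₁ |ψ⟩ ≤ 2√(α²+1). -/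
open Matrix Kronecker

private lemma dot_cs (u v : Fin 2 × Fin 2 → ℂ) :
    (star u ⬝ᵥ v).re ≤ Real.sqrt (star u ⬝ᵥ u).re * Real.sqrt (star v ⬝ᵥ v).re := by
  have h := re_inner_le_norm (𝕜 := ℂ) ((WithLp.equiv 2 ((Fin 2 × Fin 2) → ℂ)).symm u)
      ((WithLp.equiv 2 ((Fin 2 × Fin 2) → ℂ)).symm v)
  rw [norm_eq_sqrt_re_inner (𝕜 := ℂ), norm_eq_sqrt_re_inner (𝕜 := ℂ)] at h
  simpa only [WithLp.equiv_symm_apply, EuclideanSpace.inner_toLp_toLp, dotProduct_comm _ (star _), RCLike.re_to_complex] using h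

private lemma dot_nonneg (v : Fin 2 × Fin 2 → ℂ) : 0 ≤ (star v ⬝ᵥ v).re := by
  have h := inner_self_nonneg (𝕜 := ℂ) (x := (WithLp.equiv 2 ((Fin 2 × Fin 2) → ℂ)).symm v)
  simpa only [WithLp.equiv_symm_apply, EuclideanSpace.inner_toLp_toLp, dotProduct_comm _ (star _), RCLike.re_to_complex] using h

private lemma kron_conjT (A B : Matrix (Fin 2) (Fin 2) ℂ) : (A ⊗ₖ B)ᴴ = Aᴴ ⊗ₖ Bᴴ := by
  ext i j
  simp [Matrix.conjTranspose_apply, Matrix.kroneckerMap_apply, mul_comm]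

private lemma kron_sub (A B C : Matrix (Fin 2) (Fin 2) ℂ) :
    A ⊗ₖ (B - C) = A ⊗ₖ B - A ⊗ₖ C := by
  ext i j
  simp [Matrix.kroneckerMap_apply, Matrix.sub_apply, mul_sub]

private lemma kron_split (A B : Matrix (Fin 2) (Fin 2) ℂ) :
    A ⊗ₖ B = (A ⊗ₖ 1) * (1 ⊗ₖ B) := by
  rw [← Matrix.mul_kronecker_mul, mul_one, one_mul]

private lemma key (P N : Matrix (Fin 2 × Fin 2) (Fin 2 × Fin 2) ℂ)
    (ψ : Fin 2 × Fin 2 → ℂ) (hψ : star ψ ⬝ᵥ ψ = 1)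
    (hP : Pᴴ = P) (hP2 : P * P = 1) (hN : Nᴴ = N) :
    (star ψ ⬝ᵥ ((P * N) *ᵥ ψ)).re ≤ Real.sqrt (star ψ ⬝ᵥ ((N * N) *ᵥ ψ)).re := by
  have h1 : star ψ ⬝ᵥ ((P * N) *ᵥ ψ) = star (P *ᵥ ψ) ⬝ᵥ (N *ᵥ ψ) := by
    rw [star_mulVec, hP, ← mulVec_mulVec, dotProduct_mulVec]
  have h2 : star (P *ᵥ ψ) ⬝ᵥ (P *ᵥ ψ) = 1 := by
    rw [star_mulVec, hP, ← dotProduct_mulVec, mulVec_mulVec, hP2, one_mulVec, hψ]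
  have h3 : star (N *ᵥ ψ) ⬝ᵥ (N *ᵥ ψ) = star ψ ⬝ᵥ ((N * N) *ᵥ ψ) := by
    rw [star_mulVec, hN, ← dotProduct_mulVec, mulVec_mulVec]
  calc (star ψ ⬝ᵥ ((P * N) *ᵥ ψ)).re = (star (P *ᵥ ψ) ⬝ᵥ (N *ᵥ ψ)).re := by rw [h1]
    _ ≤ Real.sqrt (star (P *ᵥ ψ) ⬝ᵥ (P *ᵥ ψ)).re *
        Real.sqrt (star (N *ᵥ ψ) ⬝ᵥ (N *ᵥ ψ)).re := dot_cs _ _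
    _ = Real.sqrt (star ψ ⬝ᵥ ((N * N) *ᵥ ψ)).re := by
        rw [h2, h3]; simp

theorem stmt7 (α : ℝ) (hα : 0 < α)
    (A₀ A₁ B₀ B₁ : Matrix (Fin 2) (Fin 2) ℂ)
    (hA0 : A₀.IsHermitian) (hA1 : A₁.IsHermitian)
    (hB0 : B₀.IsHermitian) (hB1 : B₁.IsHermitian)
    (hA02 : A₀ * A₀ = 1) (hA12 : A₁ * A₁ = 1)
    (hB02 : B₀ * B₀ = 1) (hB12 : B₁ * B₁ = 1)
    (ψ : Fin 2 × Fin 2 → ℂ) (hψ : star ψ ⬝ᵥ ψ = 1) :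
    (star ψ ⬝ᵥ (((α : ℂ) • (A₀ ⊗ₖ B₀) + (α : ℂ) • (A₀ ⊗ₖ B₁)
        + A₁ ⊗ₖ B₀ - A₁ ⊗ₖ B₁) *ᵥ ψ)).re ≤ 2 * Real.sqrt (α ^ 2 + 1) := by
  set S := B₀ + B₁ with hS
  set T := B₀ - B₁ with hT
  -- decompose the matrix
  have hM : (α : ℂ) • (A₀ ⊗ₖ B₀) + (α : ℂ) • (A₀ ⊗ₖ B₁) + A₁ ⊗ₖ B₀ - A₁ ⊗ₖ B₁
      = (α : ℂ) • ((A₀ ⊗ₖ 1) * (1 ⊗ₖ S)) + (A₁ ⊗ₖ 1) * (1 ⊗ₖ T) := by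
    rw [← kron_split A₀ S, ← kron_split A₁ T, hS, hT, Matrix.kronecker_add, kron_sub, smul_add]
    abel
  -- hermitian facts
  have hP0 : (A₀ ⊗ₖ (1 : Matrix (Fin 2) (Fin 2) ℂ))ᴴ = A₀ ⊗ₖ 1 := by
    rw [kron_conjT, hA0.eq, Matrix.conjTranspose_one]
  have hP1 : (A₁ ⊗ₖ (1 : Matrix (Fin 2) (Fin 2) ℂ))ᴴ = A₁ ⊗ₖ 1 := by
    rw [kron_conjT, hA1.eq, Matrix.conjTranspose_one]
  have hNS : ((1 : Matrix (Fin 2) (Fin 2) ℂ) ⊗ₖ S)ᴴ = 1 ⊗ₖ S := by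
    rw [kron_conjT, Matrix.conjTranspose_one, hS, Matrix.conjTranspose_add, hB0.eq, hB1.eq]
  have hNT : ((1 : Matrix (Fin 2) (Fin 2) ℂ) ⊗ₖ T)ᴴ = 1 ⊗ₖ T := by
    rw [kron_conjT, Matrix.conjTranspose_one, hT, Matrix.conjTranspose_sub, hB0.eq, hB1.eq]
  have hP02 : (A₀ ⊗ₖ (1 : Matrix (Fin 2) (Fin 2) ℂ)) * (A₀ ⊗ₖ 1) = 1 := by
    rw [← Matrix.mul_kronecker_mul, hA02, mul_one, Matrix.one_kronecker_one]
  have hP12 : (A₁ ⊗ₖ (1 : Matrix (Fin 2) (Fin 2) ℂ)) * (A₁ ⊗ₖ 1) = 1 := by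
    rw [← Matrix.mul_kronecker_mul, hA12, mul_one, Matrix.one_kronecker_one]
  -- the two bounds
  set x := (star ψ ⬝ᵥ ((((1 : Matrix (Fin 2) (Fin 2) ℂ) ⊗ₖ S) * (1 ⊗ₖ S)) *ᵥ ψ)).re with hx
  set y := (star ψ ⬝ᵥ ((((1 : Matrix (Fin 2) (Fin 2) ℂ) ⊗ₖ T) * (1 ⊗ₖ T)) *ᵥ ψ)).re with hy
  have e1 : (star ψ ⬝ᵥ (((A₀ ⊗ₖ 1) * (1 ⊗ₖ S)) *ᵥ ψ)).re ≤ Real.sqrt x :=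
    key _ _ ψ hψ hP0 hP02 hNS
  have e2 : (star ψ ⬝ᵥ (((A₁ ⊗ₖ 1) * (1 ⊗ₖ T)) *ᵥ ψ)).re ≤ Real.sqrt y :=
    key _ _ ψ hψ hP1 hP12 hNT
  -- x, y are nonneg
  have hx' : x = (star (((1 : Matrix (Fin 2) (Fin 2) ℂ) ⊗ₖ S) *ᵥ ψ) ⬝ᵥ
      (((1 : Matrix (Fin 2) (Fin 2) ℂ) ⊗ₖ S) *ᵥ ψ)).re := by
    rw [hx, star_mulVec, hNS, ← dotProduct_mulVec, mulVec_mulVec]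
  have hy' : y = (star (((1 : Matrix (Fin 2) (Fin 2) ℂ) ⊗ₖ T) *ᵥ ψ) ⬝ᵥ
      (((1 : Matrix (Fin 2) (Fin 2) ℂ) ⊗ₖ T) *ᵥ ψ)).re := by
    rw [hy, star_mulVec, hNT, ← dotProduct_mulVec, mulVec_mulVec]
  have hxnn : 0 ≤ x := hx' ▸ dot_nonneg _
  have hynn : 0 ≤ y := hy' ▸ dot_nonneg _
  -- x + y = 4
  have hsum : x + y = 4 := by
    have expand : S * S + T * T = 1 + 1 + (1 + 1) := by
      have : S * S + T * T = B₀ * B₀ + B₀ * B₀ + (B₁ * B₁ + B₁ * B₁) := by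
        rw [hS, hT]; noncomm_ring
      rw [this, hB02, hB12]
    have hkron : ((1 : Matrix (Fin 2) (Fin 2) ℂ) ⊗ₖ S) * (1 ⊗ₖ S)
        + ((1 : Matrix (Fin 2) (Fin 2) ℂ) ⊗ₖ T) * (1 ⊗ₖ T) = 1 + 1 + (1 + 1) := by
      rw [← Matrix.mul_kronecker_mul, ← Matrix.mul_kronecker_mul, mul_one,
        ← Matrix.kronecker_add, expand, Matrix.kronecker_add, Matrix.kronecker_add]
      simp [Matrix.one_kronecker_one]
    have : star ψ ⬝ᵥ ((((1 : Matrix (Fin 2) (Fin 2) ℂ) ⊗ₖ S) * (1 ⊗ₖ S)) *ᵥ ψ)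
        + star ψ ⬝ᵥ ((((1 : Matrix (Fin 2) (Fin 2) ℂ) ⊗ₖ T) * (1 ⊗ₖ T)) *ᵥ ψ) = 4 := by
      rw [← dotProduct_add, ← Matrix.add_mulVec, hkron]
      have : ((1 : Matrix (Fin 2 × Fin 2) (Fin 2 × Fin 2) ℂ) + 1 + (1 + 1)) *ᵥ ψ
          = ψ + ψ + (ψ + ψ) := by
        simp [Matrix.add_mulVec, Matrix.one_mulVec]
      rw [this]
      simp only [dotProduct_add, hψ]
      norm_num
    have := congrArg Complex.re this
    simpa [Complex.add_re] using this
  -- expectation decomposes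
  have hdec : (star ψ ⬝ᵥ (((α : ℂ) • (A₀ ⊗ₖ B₀) + (α : ℂ) • (A₀ ⊗ₖ B₁)
        + A₁ ⊗ₖ B₀ - A₁ ⊗ₖ B₁) *ᵥ ψ)).re
      = α * (star ψ ⬝ᵥ (((A₀ ⊗ₖ 1) * (1 ⊗ₖ S)) *ᵥ ψ)).re
        + (star ψ ⬝ᵥ (((A₁ ⊗ₖ 1) * (1 ⊗ₖ T)) *ᵥ ψ)).re := by
    rw [hM, Matrix.add_mulVec, dotProduct_add, Complex.add_re,
      smul_mulVec, dotProduct_smul]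
    congr 1
    rw [smul_eq_mul, Complex.re_ofReal_mul]
  rw [hdec]
  have step1 : α * (star ψ ⬝ᵥ (((A₀ ⊗ₖ 1) * (1 ⊗ₖ S)) *ᵥ ψ)).re
        + (star ψ ⬝ᵥ (((A₁ ⊗ₖ 1) * (1 ⊗ₖ T)) *ᵥ ψ)).re
      ≤ α * Real.sqrt x + Real.sqrt y := by
    have := mul_le_mul_of_nonneg_left e1 hα.le
    linarith
  refine step1.trans ?_
  -- final arithmetic
  have ha : Real.sqrt x ^ 2 = x := Real.sq_sqrt hxnn
  have hb : Real.sqrt y ^ 2 = y := Real.sq_sqrt hynn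
  have hL : (2 * Real.sqrt (α ^ 2 + 1)) ^ 2 = 4 * (α ^ 2 + 1) := by
    rw [mul_pow, Real.sq_sqrt (by positivity)]; ring
  nlinarith [sq_nonneg (α * Real.sqrt y - Real.sqrt x), Real.sqrt_nonneg x,
    Real.sqrt_nonneg y, Real.sqrt_nonneg (α ^ 2 + 1),
    sq_nonneg (α * Real.sqrt x + Real.sqrt y - 2 * Real.sqrt (α ^ 2 + 1))]
end
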